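/- Let 0 < q < 1, let μ, ν be nonnegative Radon measures on Ω with bounded Green potentials G[μ], G[ν], and let h ≥ 0 be bounded with ‖G[μ]‖_∞ + ‖G[ν]‖_∞ + ‖h‖_∞ > 0. Define u_0 := (1−q)^{1/(1−q)} G[μ]^{1/(1−q)} and u_j := G[u_{j−1}^q dμ] + G[ν] + h for j ≥ 1, and assume the iterated inequality G[μ]^s ≤ s G[G[μ]^{s−1} dμ] for s ≥ 1. Then the sequence (u_j) is pointwise nondecreasing: u_{j−1} ≤ u_j on Ω for every j ≥ 1. -/

import Mathlib

open MeasureTheory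
open scoped ENNReal

/-- Monotonicity of the successive approximation scheme: with
`u_0 = (1−q)^{1/(1−q)} G[μ]^{1/(1−q)}` and `u_j = G[u_{j−1}^q dμ] + G[ν] + h`,
under boundedness of `G[μ]`, `G[ν]`, `h`, positivity of
`‖G[μ]‖_∞ + ‖G[ν]‖_∞ + ‖h‖_∞`, and the Grigor'yan–Verbitsky iterated inequality,
the sequence `(u_j)` is pointwise nondecreasing. -/
theorem successive_approximation_monotone {Ω : Type*} [MeasurableSpace Ω]
    (G : Ω → Ω → ℝ≥0∞) (μ ν : Measure Ω)
    (q : ℝ) (hq0 : 0 < q) (hq1 : q < 1)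
    (h : Ω → ℝ≥0∞) (u : ℕ → Ω → ℝ≥0∞)
    (hGμb : (⨆ z, ∫⁻ y, G z y ∂μ) ≠ ⊤)
    (hGνb : (⨆ z, ∫⁻ y, G z y ∂ν) ≠ ⊤)
    (hhb : (⨆ z, h z) ≠ ⊤)
    (hpos : 0 < (⨆ z, ∫⁻ y, G z y ∂μ) + (⨆ z, ∫⁻ y, G z y ∂ν) + (⨆ z, h z))
    (hu0 : ∀ x, u 0 x
      = ENNReal.ofReal ((1 - q) ^ (1 / (1 - q))) * (∫⁻ y, G x y ∂μ) ^ (1 / (1 - q)))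
    (huj : ∀ j x, u (j + 1) x
      = (∫⁻ y, G x y * (u j y) ^ q ∂μ) + (∫⁻ y, G x y ∂ν) + h x)
    (hiter : ∀ s : ℝ, 1 ≤ s → ∀ x,
      (∫⁻ y, G x y ∂μ) ^ s
        ≤ ENNReal.ofReal s * ∫⁻ y, G x y * (∫⁻ z, G y z ∂μ) ^ (s - 1) ∂μ) :
    ∀ j x, u j x ≤ u (j + 1) x := by
  have h1q : 0 < 1 - q := by linarith
  have hs1 : (1:ℝ) ≤ 1 / (1 - q) := by
    rw [le_div_iff₀ h1q]; linarith
  set s : ℝ := 1 / (1 - q) with hsdef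
  have hspos : 0 < s := by positivity
  have hcpos : (0:ℝ) < (1 - q) ^ s := Real.rpow_pos_of_pos h1q s
  have hsq : s * q = s - 1 := by
    rw [hsdef]
    field_simp
    ring
  -- key real identity: (1-q)^s * s = ((1-q)^s)^q
  have hkey : (1 - q) ^ s * s = ((1 - q) ^ s) ^ q := by
    rw [← Real.rpow_mul h1q.le, hsq, Real.rpow_sub h1q, Real.rpow_one, hsdef]
    ring
  intro j
  induction j with
  | zero =>
    intro x
    rw [hu0, huj]
    calc ENNReal.ofReal ((1 - q) ^ s) * (∫⁻ y, G x y ∂μ) ^ s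
        ≤ ENNReal.ofReal ((1 - q) ^ s) *
            (ENNReal.ofReal s * ∫⁻ y, G x y * (∫⁻ z, G y z ∂μ) ^ (s - 1) ∂μ) :=
          mul_le_mul_right (hiter s hs1 x) _
      _ = ∫⁻ y, G x y * (u 0 y) ^ q ∂μ := by
          rw [← mul_assoc, ← ENNReal.ofReal_mul hcpos.le, hkey,
            ← lintegral_const_mul' _ _ ENNReal.ofReal_ne_top]
          refine lintegral_congr fun y => ?_
          rw [hu0 y, ENNReal.mul_rpow_of_nonneg _ _ hq0.le,
            ENNReal.ofReal_rpow_of_pos hcpos, ← ENNReal.rpow_mul, hsq]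
          ring
      _ ≤ _ := le_add_right le_self_add
  | succ j ih =>
    intro x
    rw [huj, huj]
    gcongr with y
    exact ih y
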